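/- Let p ≥ 3 be a prime, σ ∈ (1/2, 3/4), l ≥ 1 a natural number, and β = -2√3 - 6·log(1 - 1/√3). Then (1/2π)∫₀^{2π} (p^{2σ}/(p^{2σ} + 1 - 2p^σ·cos θ))^l dθ ≤ exp((l² + βl)/p^{2σ}). -/

import Mathlib

open Real MeasureTheory intervalIntegral

lemma tail_hasSum {x : ℝ} (hx : |x| < 1) :
    HasSum (fun n : ℕ => x ^ (n + 2) / (n + 2)) (-Real.log (1 - x) - x) := by
  have h := Real.hasSum_pow_div_log_of_abs_lt_one hx
  have h2 := (hasSum_nat_add_iff' (f := fun n : ℕ => x ^ (n + 1) / (n + 1)) 1).mpr h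
  simp only [Finset.range_one, Finset.sum_singleton] at h2
  convert h2 using 2 with n
  · rfl
  · push_cast; ring_nf
  · norm_num

lemma sqrt3_facts : 1 < Real.sqrt 3 ∧ Real.sqrt 3 * Real.sqrt 3 = 3 := by
  constructor
  · have : Real.sqrt 1 < Real.sqrt 3 := by
      apply Real.sqrt_lt_sqrt <;> norm_num
    simpa using this
  · exact Real.mul_self_sqrt (by norm_num)

lemma s_facts : 0 < 1 / Real.sqrt 3 ∧ 1 / Real.sqrt 3 < 1 := by
  obtain ⟨h1, _⟩ := sqrt3_facts
  constructor
  · positivity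
  · rw [div_lt_one (by linarith)]; exact h1

-- key inequality K
lemma keyK {r : ℝ} (h0 : 0 ≤ r) (h1 : r ≤ 1 / Real.sqrt 3) :
    -Real.log (1 - r) - r ≤ (-Real.sqrt 3 - 3 * Real.log (1 - 1 / Real.sqrt 3)) * r ^ 2 := by
  obtain ⟨hs3, hs3sq⟩ := sqrt3_facts
  set s : ℝ := 1 / Real.sqrt 3 with hs
  obtain ⟨hs0, hs1⟩ := s_facts
  have hssq : s ^ 2 = 1 / 3 := by
    rw [hs]; rw [div_pow, one_pow]; rw [sq]; rw [hs3sq]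
  have hr1 : r < 1 := lt_of_le_of_lt h1 hs1
  have hxr : |r| < 1 := by rw [abs_of_nonneg h0]; exact hr1
  have hxs : |s| < 1 := by rw [abs_of_nonneg hs0.le]; exact hs1
  have hr := tail_hasSum hxr
  have hsS := (tail_hasSum hxs).mul_left (3 * r ^ 2)
  have hle : -Real.log (1 - r) - r ≤ 3 * r ^ 2 * (-Real.log (1 - s) - s) := by
    refine hasSum_le (fun n => ?_) hr hsS
    have h2 : r ^ (n + 2) = r ^ n * r ^ 2 := by ring
    have h3 : 3 * r ^ 2 * (s ^ (n + 2) / ((n : ℝ) + 2)) = 3 * s ^ 2 * s ^ n * r ^ 2 / ((n : ℝ) + 2) := by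
      ring
    rw [h2, h3, hssq]
    have hn2 : (0:ℝ) < (n : ℝ) + 2 := by positivity
    rw [div_le_div_iff₀ hn2 hn2]
    have h4 : r ^ n ≤ s ^ n := pow_le_pow_left₀ h0 h1 n
    have h5 := mul_le_mul_of_nonneg_right h4 (show (0:ℝ) ≤ r ^ 2 * ((n:ℝ) + 2) by positivity)
    nlinarith [h5]
  have heq : 3 * r ^ 2 * (-Real.log (1 - s) - s) =
      (-Real.sqrt 3 - 3 * Real.log (1 - s)) * r ^ 2 := by
    have h3s : 3 * s = Real.sqrt 3 := by
      rw [hs]; field_simp; rw [Real.sq_sqrt (by norm_num : (0:ℝ) ≤ 3)]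
    nlinarith [h3s]
  linarith [heq ▸ hle]

-- log(1+r) ≥ r - r^2/2
lemma log_one_add_ge {r : ℝ} (h0 : 0 ≤ r) : r - r ^ 2 / 2 ≤ Real.log (1 + r) := by
  have hc : ContinuousOn (fun t : ℝ => (1 + t)⁻¹) (Set.uIcc 0 r) := by
    apply ContinuousOn.inv₀ (by fun_prop)
    intro t ht
    rw [Set.uIcc_of_le h0] at ht
    have := ht.1; positivity
  have hint : IntervalIntegrable (fun t : ℝ => (1 + t)⁻¹) MeasureTheory.volume 0 r :=
    hc.intervalIntegrable
  have h1 : (∫ t in (0:ℝ)..r, (1 + t)⁻¹) = Real.log (1 + r) := by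
    have := intervalIntegral.integral_comp_add_left (a := (0:ℝ)) (b := r)
      (fun u : ℝ => u⁻¹) 1
    rw [this, add_zero, integral_inv_of_pos one_pos (by linarith), div_one]
  have h2 : (∫ t in (0:ℝ)..r, (1 - (1 + t)⁻¹)) = r - Real.log (1 + r) := by
    rw [intervalIntegral.integral_sub intervalIntegrable_const hint, h1]
    simp
  have h3 : (∫ t in (0:ℝ)..r, (1 - (1 + t)⁻¹)) ≤ ∫ t in (0:ℝ)..r, t := by
    apply intervalIntegral.integral_mono_on h0
      (intervalIntegrable_const.sub hint)
      (by apply Continuous.intervalIntegrable; fun_prop)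
    intro t ht
    have ht0 : 0 ≤ t := ht.1
    have h1t : 0 < 1 + t := by linarith
    have h4 : 1 - t ≤ (1 + t)⁻¹ := by
      rw [inv_eq_one_div, le_div_iff₀ h1t]; nlinarith
    linarith
  rw [h2, integral_id] at h3
  nlinarith [h3]

-- β ≥ 1
lemma beta_ge_one {β : ℝ}
    (hβ : β = -2 * Real.sqrt 3 - 6 * Real.log (1 - 1 / Real.sqrt 3)) : 1 ≤ β := by
  obtain ⟨hs3, hs3sq⟩ := sqrt3_facts
  obtain ⟨hs0, hs1⟩ := s_facts
  set s : ℝ := 1 / Real.sqrt 3 with hs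
  have hssq : s ^ 2 = 1 / 3 := by
    rw [hs, div_pow, one_pow, sq, hs3sq]
  have hxs : |s| < 1 := by rw [abs_of_nonneg hs0.le]; exact hs1
  have h := tail_hasSum hxs
  have hge : s ^ 2 / 2 ≤ -Real.log (1 - s) - s := by
    have := le_hasSum h 0 (fun j _ => by positivity)
    norm_num at this
    linarith [this]
  have h3s : 3 * s = Real.sqrt 3 := by rw [hs]; field_simp; rw [Real.sq_sqrt (by norm_num : (0:ℝ) ≤ 3)]
  rw [hβ]
  have : -Real.log (1 - s) - s ≥ 1 / 6 := by rw [hssq] at hge; linarith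
  nlinarith [this, h3s]

-- pointwise bound
lemma pointwise_bound {β r c : ℝ}
    (hβ : β = -2 * Real.sqrt 3 - 6 * Real.log (1 - 1 / Real.sqrt 3))
    (h0 : 0 < r) (h1 : r ≤ 1 / Real.sqrt 3) (hc : -1 ≤ c) (hc' : c ≤ 1) :
    1 / (1 + r ^ 2 - 2 * r * c) ≤ Real.exp (2 * r * c + β * r ^ 2) := by
  obtain ⟨hs0, hs1⟩ := s_facts
  have hβ1 : 1 ≤ β := beta_ge_one hβ
  have hr1 : r < 1 := lt_of_le_of_lt h1 hs1
  have hA : (0:ℝ) < (1 + r) ^ 2 := by positivity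
  have hB : (0:ℝ) < (1 - r) ^ 2 := by nlinarith
  set a : ℝ := (1 - c) / 2 with ha
  set b : ℝ := (1 + c) / 2 with hb
  have ha0 : 0 ≤ a := by rw [ha]; linarith
  have hb0 : 0 ≤ b := by rw [hb]; linarith
  have hab : a + b = 1 := by rw [ha, hb]; ring
  have hX : 0 < 1 + r ^ 2 - 2 * r * c := by nlinarith
  have hkey : a * (1 + r) ^ 2 + b * (1 - r) ^ 2 = 1 + r ^ 2 - 2 * r * c := by
    rw [ha, hb]; ring
  have hconc := (strictConcaveOn_log_Ioi.concaveOn).2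
    (Set.mem_Ioi.mpr hA) (Set.mem_Ioi.mpr hB) ha0 hb0 hab
  simp only [smul_eq_mul] at hconc
  rw [hkey] at hconc
  have hlogA : Real.log ((1 + r) ^ 2) = 2 * Real.log (1 + r) := by
    rw [Real.log_pow]; norm_num
  have hlogB : Real.log ((1 - r) ^ 2) = 2 * Real.log (1 - r) := by
    rw [Real.log_pow]; norm_num
  have hlog1 : r - β * r ^ 2 / 2 ≤ Real.log (1 + r) := by
    have := log_one_add_ge h0.le
    nlinarith [sq_nonneg r]
  have hlog2 : -r - β * r ^ 2 / 2 ≤ Real.log (1 - r) := by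
    have := keyK h0.le h1
    have hb2 : β / 2 = -Real.sqrt 3 - 3 * Real.log (1 - 1 / Real.sqrt 3) := by
      rw [hβ]; ring
    nlinarith [this, hb2]
  have hmain : -(2 * r * c) - β * r ^ 2 ≤ Real.log (1 + r ^ 2 - 2 * r * c) := by
    have hca : a - b = -c := by rw [ha, hb]; ring
    calc -(2 * r * c) - β * r ^ 2
        = a * (2 * (r - β * r ^ 2 / 2)) + b * (2 * (-r - β * r ^ 2 / 2)) := by
          rw [ha, hb]; ring
      _ ≤ a * Real.log ((1 + r) ^ 2) + b * Real.log ((1 - r) ^ 2) := by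
          rw [hlogA, hlogB]
          have g1 : a * (2 * (r - β * r ^ 2 / 2)) ≤ a * (2 * Real.log (1 + r)) := by
            apply mul_le_mul_of_nonneg_left (by linarith) ha0
          have g2 : b * (2 * (-r - β * r ^ 2 / 2)) ≤ b * (2 * Real.log (1 - r)) := by
            apply mul_le_mul_of_nonneg_left (by linarith) hb0
          linarith
      _ ≤ Real.log (1 + r ^ 2 - 2 * r * c) := hconc
  have hexp : Real.exp (-(2 * r * c) - β * r ^ 2) ≤ 1 + r ^ 2 - 2 * r * c := by
    calc Real.exp (-(2 * r * c) - β * r ^ 2)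
        ≤ Real.exp (Real.log (1 + r ^ 2 - 2 * r * c)) := Real.exp_le_exp.2 hmain
      _ = 1 + r ^ 2 - 2 * r * c := Real.exp_log hX
  rw [div_le_iff₀ hX]
  calc (1:ℝ) = Real.exp (2 * r * c + β * r ^ 2) * Real.exp (-(2 * r * c) - β * r ^ 2) := by
        rw [← Real.exp_add]; norm_num
    _ ≤ Real.exp (2 * r * c + β * r ^ 2) * (1 + r ^ 2 - 2 * r * c) := by
        apply mul_le_mul_of_nonneg_left hexp (Real.exp_pos _).le

lemma cos_even_integral (k : ℕ) :
    (∫ θ in (0:ℝ)..(2 * Real.pi), Real.cos θ ^ (2 * k)) =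
      2 * Real.pi * ((Nat.factorial (2 * k) : ℝ) / (4 ^ k * (Nat.factorial k : ℝ) ^ 2)) := by
  induction k with
  | zero => simp [Nat.factorial]
  | succ k ih =>
    have h2 : 2 * (k + 1) = 2 * k + 2 := by ring
    rw [h2, integral_cos_pow]
    rw [Real.sin_two_pi, Real.sin_zero, ih]
    have hf1 : (Nat.factorial (2 * k + 2) : ℝ) = (2 * k + 2) * (2 * k + 1) * Nat.factorial (2 * k) := by
      rw [show 2 * k + 2 = (2 * k + 1) + 1 by ring, Nat.factorial_succ, Nat.factorial_succ]
      push_cast; ring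
    have hf2 : (Nat.factorial (k + 1) : ℝ) = (k + 1) * Nat.factorial k := by
      rw [Nat.factorial_succ]; push_cast; ring
    rw [hf1, hf2]
    have hknz : ((Nat.factorial k : ℝ)) ≠ 0 := Nat.cast_ne_zero.mpr k.factorial_ne_zero
    have h2knz : ((Nat.factorial (2*k) : ℝ)) ≠ 0 := Nat.cast_ne_zero.mpr (2*k).factorial_ne_zero
    field_simp
    push_cast
    ring

lemma sinh_integral_zero (a : ℝ) :
    (∫ θ in (0:ℝ)..(2 * Real.pi), Real.sinh (a * Real.cos θ)) = 0 := by
  have hcont : Continuous fun θ : ℝ => Real.sinh (a * Real.cos θ) := by fun_prop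
  have h1 : (∫ θ in (0:ℝ)..Real.pi, Real.sinh (a * Real.cos θ)) = 0 := by
    have hrefl := intervalIntegral.integral_comp_sub_left (a := (0:ℝ)) (b := Real.pi)
      (fun x : ℝ => Real.sinh (a * Real.cos x)) Real.pi
    simp only [sub_zero, sub_self] at hrefl
    have heq : (∫ x in (0:ℝ)..Real.pi, Real.sinh (a * Real.cos (Real.pi - x)))
        = ∫ x in (0:ℝ)..Real.pi, -Real.sinh (a * Real.cos x) := by
      apply intervalIntegral.integral_congr
      intro x _
      simp [Real.cos_pi_sub, mul_neg, Real.sinh_neg]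
    rw [heq, intervalIntegral.integral_neg] at hrefl
    linarith
  have h2 : (∫ θ in Real.pi..(2 * Real.pi), Real.sinh (a * Real.cos θ)) = 0 := by
    have hshift := intervalIntegral.integral_comp_add_right (a := (0:ℝ)) (b := Real.pi)
      (fun x : ℝ => Real.sinh (a * Real.cos x)) Real.pi
    simp only [zero_add] at hshift
    rw [show Real.pi + Real.pi = 2 * Real.pi by ring] at hshift
    have heq : (∫ x in (0:ℝ)..Real.pi, Real.sinh (a * Real.cos (x + Real.pi)))
        = ∫ x in (0:ℝ)..Real.pi, -Real.sinh (a * Real.cos x) := by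
      apply intervalIntegral.integral_congr
      intro x _
      simp [Real.cos_add_pi, Real.sinh_neg]
    rw [heq, intervalIntegral.integral_neg, h1] at hshift
    rw [← hshift]; ring
  rw [← intervalIntegral.integral_add_adjacent_intervals
    (hcont.intervalIntegrable 0 Real.pi) (hcont.intervalIntegrable Real.pi (2 * Real.pi)),
    h1, h2, add_zero]

lemma I0_bound {a : ℝ} (ha : 0 ≤ a) :
    (∫ θ in (0:ℝ)..(2 * Real.pi), Real.exp (a * Real.cos θ)) ≤
      2 * Real.pi * Real.exp (a ^ 2 / 4) := by
  have hπ : (0:ℝ) ≤ 2 * Real.pi := by positivity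
  have hsplit : (∫ θ in (0:ℝ)..(2 * Real.pi), Real.exp (a * Real.cos θ)) =
      ∫ θ in (0:ℝ)..(2 * Real.pi), Real.cosh (a * Real.cos θ) := by
    have hcongr : (∫ θ in (0:ℝ)..(2 * Real.pi), Real.exp (a * Real.cos θ)) =
        ∫ θ in (0:ℝ)..(2 * Real.pi),
          (Real.cosh (a * Real.cos θ) + Real.sinh (a * Real.cos θ)) := by
      apply intervalIntegral.integral_congr
      intro θ _
      exact (Real.cosh_add_sinh _).symm
    rw [hcongr, intervalIntegral.integral_add
      ((by fun_prop : Continuous fun θ : ℝ => Real.cosh (a * Real.cos θ)).intervalIntegrable _ _)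
      ((by fun_prop : Continuous fun θ : ℝ => Real.sinh (a * Real.cos θ)).intervalIntegrable _ _),
      sinh_integral_zero, add_zero]
  rw [hsplit]
  set μ := volume.restrict (Set.Ioc (0:ℝ) (2 * Real.pi)) with hμ
  set F : ℕ → ℝ → ℝ := fun k θ => (a * Real.cos θ) ^ (2 * k) / (Nat.factorial (2 * k)) with hF
  have hInt : ∀ k, Integrable (F k) μ := by
    intro k
    exact ((by fun_prop : Continuous fun θ : ℝ =>
      (a * Real.cos θ) ^ (2 * k) / (Nat.factorial (2 * k))).integrableOn_Ioc)
  have hBound : ∀ k θ, ‖F k θ‖ ≤ a ^ (2 * k) / (Nat.factorial (2 * k)) := by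
    intro k θ
    rw [hF, Real.norm_eq_abs, abs_div, abs_pow, Nat.abs_cast]
    have h1 : |a * Real.cos θ| ≤ a := by
      rw [abs_mul, abs_of_nonneg ha]
      calc a * |Real.cos θ| ≤ a * 1 :=
            mul_le_mul_of_nonneg_left (Real.abs_cos_le_one θ) ha
        _ = a := mul_one a
    have hfacpos : (0:ℝ) < (Nat.factorial (2 * k) : ℝ) := by
      exact_mod_cast (Nat.factorial_pos _)
    gcongr
  have hIntNorm : ∀ k, (∫ θ, ‖F k θ‖ ∂μ) ≤ 2 * Real.pi * (a ^ (2 * k) / (Nat.factorial (2 * k))) := by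
    intro k
    have hconst : Integrable (fun _ : ℝ => a ^ (2 * k) / (Nat.factorial (2 * k) : ℝ)) μ := by
      rw [hμ]
      exact integrableOn_const measure_Ioc_lt_top.ne
    calc (∫ θ, ‖F k θ‖ ∂μ) ≤ ∫ _θ, a ^ (2 * k) / (Nat.factorial (2 * k) : ℝ) ∂μ :=
          integral_mono ((hInt k).norm) hconst (fun θ => hBound k θ)
      _ = 2 * Real.pi * (a ^ (2 * k) / (Nat.factorial (2 * k))) := by
          rw [MeasureTheory.integral_const, hμ]
          simp only [Measure.real, Measure.restrict_apply, Set.univ_inter, MeasurableSet.univ,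
            Real.volume_Ioc]
          rw [sub_zero, ENNReal.toReal_ofReal hπ, smul_eq_mul]
  have hSum : Summable fun k => ∫ θ, ‖F k θ‖ ∂μ := by
    apply Summable.of_nonneg_of_le
      (fun k => integral_nonneg (fun θ => norm_nonneg _)) hIntNorm
    exact ((Real.hasSum_cosh a).summable.mul_left (2 * Real.pi))
  have hHasSum := MeasureTheory.hasSum_integral_of_summable_integral_norm hInt hSum
  have hcoshEq : (∫ θ, (∑' k, F k θ) ∂μ) = ∫ θ, Real.cosh (a * Real.cos θ) ∂μ := by
    apply MeasureTheory.integral_congr_ae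
    filter_upwards with θ
    exact (Real.hasSum_cosh (a * Real.cos θ)).tsum_eq
  rw [hcoshEq] at hHasSum
  have hterm : ∀ k, (∫ θ, F k θ ∂μ) =
      2 * Real.pi * (a ^ (2 * k) / (4 ^ k * (Nat.factorial k : ℝ) ^ 2)) := by
    intro k
    have h1 : (∫ θ, F k θ ∂μ) =
        (a ^ (2 * k) / (Nat.factorial (2 * k) : ℝ)) * ∫ θ, Real.cos θ ^ (2 * k) ∂μ := by
      rw [← MeasureTheory.integral_const_mul]
      apply MeasureTheory.integral_congr_ae
      filter_upwards with θ
      rw [hF]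
      simp only
      rw [mul_pow]
      ring
    have h2 : (∫ θ, Real.cos θ ^ (2 * k) ∂μ) =
        ∫ θ in (0:ℝ)..(2 * Real.pi), Real.cos θ ^ (2 * k) := by
      rw [intervalIntegral.integral_of_le hπ, hμ]
    rw [h1, h2, cos_even_integral k]
    have h2knz : ((Nat.factorial (2 * k) : ℝ)) ≠ 0 :=
      Nat.cast_ne_zero.mpr (Nat.factorial_ne_zero _)
    field_simp
  have hexp : HasSum (fun k => 2 * Real.pi * ((a ^ 2 / 4) ^ k / (Nat.factorial k : ℝ)))
      (2 * Real.pi * Real.exp (a ^ 2 / 4)) := by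
    have : HasSum (fun k : ℕ => (a ^ 2 / 4) ^ k / (Nat.factorial k : ℝ)) (Real.exp (a ^ 2 / 4)) := by
      rw [Real.exp_eq_exp_ℝ]
      exact NormedSpace.expSeries_div_hasSum_exp (a ^ 2 / 4)
    exact this.mul_left _
  rw [intervalIntegral.integral_of_le hπ]
  refine hasSum_le (fun k => ?_) hHasSum hexp
  rw [hterm k]
  have hpk : (a ^ 2 / 4) ^ k = a ^ (2 * k) / 4 ^ k := by
    rw [div_pow, ← pow_mul]
  rw [hpk, div_div]
  have hfk : (1:ℝ) ≤ (Nat.factorial k : ℝ) := by exact_mod_cast (Nat.one_le_iff_ne_zero.mpr (Nat.factorial_ne_zero k))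
  gcongr
  nlinarith [hfk]

theorem stmt_12 (p : ℕ) (hp : p.Prime) (hp3 : 3 ≤ p) (σ : ℝ)
    (hσ : σ ∈ Set.Ioo (1/2 : ℝ) (3/4)) (l : ℕ) (hl : 1 ≤ l) (β : ℝ)
    (hβ : β = -2 * Real.sqrt 3 - 6 * Real.log (1 - 1 / Real.sqrt 3)) :
    (1 / (2 * Real.pi)) * ∫ θ in (0:ℝ)..(2 * Real.pi),
        ((p : ℝ) ^ (2 * σ) / ((p : ℝ) ^ (2 * σ) + 1 - 2 * (p : ℝ) ^ σ * Real.cos θ)) ^ l ≤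
      Real.exp (((l : ℝ) ^ 2 + β * l) / (p : ℝ) ^ (2 * σ)) := by
  obtain ⟨hσ1, hσ2⟩ := hσ
  have hp3R : (3:ℝ) ≤ (p:ℝ) := by exact_mod_cast hp3
  have hp0 : (0:ℝ) < (p:ℝ) := by linarith
  have hσ0 : (0:ℝ) < σ := by linarith
  set P : ℝ := (p:ℝ) ^ σ with hP
  have hP1 : 1 < P := by
    rw [hP]
    rw [Real.one_lt_rpow_iff_of_pos hp0]
    left; exact ⟨by linarith, hσ0⟩
  have hPpos : 0 < P := by linarith
  set r : ℝ := P⁻¹ with hr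
  have hr0 : 0 < r := by rw [hr]; positivity
  have hrP : r = (p:ℝ) ^ (-σ) := by rw [hr, hP, ← Real.rpow_neg hp0.le]
  have hrs : r ≤ 1 / Real.sqrt 3 := by
    rw [hrP]
    calc (p:ℝ) ^ (-σ) ≤ (3:ℝ) ^ (-σ) :=
          Real.rpow_le_rpow_of_nonpos (by norm_num) hp3R (by linarith)
      _ ≤ (3:ℝ) ^ (-(1/2 : ℝ)) :=
          Real.rpow_le_rpow_of_exponent_le (by norm_num) (by linarith)
      _ = 1 / Real.sqrt 3 := by
          rw [Real.rpow_neg (by norm_num : (0:ℝ) ≤ 3), ← Real.sqrt_eq_rpow, one_div]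
  have hr1 : r < 1 := by
    have h1 : 1 / Real.sqrt 3 < 1 := by
      rw [div_lt_one (by positivity)]
      have : Real.sqrt 1 < Real.sqrt 3 := by apply Real.sqrt_lt_sqrt <;> norm_num
      simpa using this
    linarith
  have hp2σ : (p:ℝ) ^ (2 * σ) = P ^ 2 := by
    rw [hP, ← Real.rpow_natCast ((p:ℝ) ^ σ) 2, ← Real.rpow_mul hp0.le]
    norm_num [mul_comm]
  have hrP2 : r ^ 2 = ((p:ℝ) ^ (2 * σ))⁻¹ := by
    rw [hp2σ, hr, ← inv_pow]
  have hDpos : ∀ θ : ℝ, 0 < (p:ℝ) ^ (2 * σ) + 1 - 2 * (p:ℝ) ^ σ * Real.cos θ := by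
    intro θ
    rw [hp2σ, ← hP]
    have h1 := Real.cos_le_one θ
    nlinarith [hP1]
  have hXpos : ∀ θ : ℝ, 0 < 1 + r ^ 2 - 2 * r * Real.cos θ := by
    intro θ
    have h1 := Real.cos_le_one θ
    nlinarith [hr0, hr1]
  have hEq : ∀ θ : ℝ, (p:ℝ) ^ (2 * σ) / ((p:ℝ) ^ (2 * σ) + 1 - 2 * (p:ℝ) ^ σ * Real.cos θ)
      = 1 / (1 + r ^ 2 - 2 * r * Real.cos θ) := by
    intro θ
    rw [div_eq_div_iff (hDpos θ).ne' (hXpos θ).ne']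
    rw [hp2σ, hr, ← hP]
    field_simp
  have hπpos : (0:ℝ) < 2 * Real.pi := by positivity
  have hpt : ∀ θ ∈ Set.Icc (0:ℝ) (2 * Real.pi),
      ((p:ℝ) ^ (2 * σ) / ((p:ℝ) ^ (2 * σ) + 1 - 2 * (p:ℝ) ^ σ * Real.cos θ)) ^ l
        ≤ Real.exp (β * l * r ^ 2) * Real.exp ((2 * l * r) * Real.cos θ) := by
    intro θ _
    rw [hEq θ]
    have h1 : 1 / (1 + r ^ 2 - 2 * r * Real.cos θ)
        ≤ Real.exp (2 * r * Real.cos θ + β * r ^ 2) :=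
      pointwise_bound hβ hr0 hrs (Real.neg_one_le_cos θ) (Real.cos_le_one θ)
    calc (1 / (1 + r ^ 2 - 2 * r * Real.cos θ)) ^ l
        ≤ (Real.exp (2 * r * Real.cos θ + β * r ^ 2)) ^ l :=
          pow_le_pow_left₀ (div_nonneg zero_le_one (hXpos θ).le) h1 l
      _ = Real.exp ((l:ℝ) * (2 * r * Real.cos θ + β * r ^ 2)) := by
          rw [Real.exp_nat_mul]
      _ = Real.exp (β * l * r ^ 2) * Real.exp ((2 * l * r) * Real.cos θ) := by
          rw [← Real.exp_add]; congr 1; ring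
  have hcont1 : Continuous fun θ : ℝ =>
      ((p:ℝ) ^ (2 * σ) / ((p:ℝ) ^ (2 * σ) + 1 - 2 * (p:ℝ) ^ σ * Real.cos θ)) ^ l := by
    apply Continuous.pow
    exact Continuous.div continuous_const (by fun_prop) (fun θ => (hDpos θ).ne')
  have hcont2 : Continuous fun θ : ℝ =>
      Real.exp (β * l * r ^ 2) * Real.exp ((2 * l * r) * Real.cos θ) := by fun_prop
  have hmono := intervalIntegral.integral_mono_on (μ := volume) hπpos.le
    (hcont1.intervalIntegrable 0 (2 * Real.pi))
    (hcont2.intervalIntegrable 0 (2 * Real.pi)) hpt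
  have h2lr : (0:ℝ) ≤ 2 * l * r := by positivity
  have hI0 := I0_bound h2lr
  have hIconst : (∫ θ in (0:ℝ)..(2 * Real.pi),
      Real.exp (β * l * r ^ 2) * Real.exp ((2 * l * r) * Real.cos θ))
      = Real.exp (β * l * r ^ 2) * ∫ θ in (0:ℝ)..(2 * Real.pi),
          Real.exp ((2 * l * r) * Real.cos θ) :=
    intervalIntegral.integral_const_mul _ _
  have hchain : (∫ θ in (0:ℝ)..(2 * Real.pi),
      ((p:ℝ) ^ (2 * σ) / ((p:ℝ) ^ (2 * σ) + 1 - 2 * (p:ℝ) ^ σ * Real.cos θ)) ^ l)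
      ≤ 2 * Real.pi * Real.exp (((l:ℝ) ^ 2 + β * l) * r ^ 2) := by
    calc (∫ θ in (0:ℝ)..(2 * Real.pi),
        ((p:ℝ) ^ (2 * σ) / ((p:ℝ) ^ (2 * σ) + 1 - 2 * (p:ℝ) ^ σ * Real.cos θ)) ^ l)
        ≤ ∫ θ in (0:ℝ)..(2 * Real.pi),
            Real.exp (β * l * r ^ 2) * Real.exp ((2 * l * r) * Real.cos θ) := hmono
      _ = Real.exp (β * l * r ^ 2) * ∫ θ in (0:ℝ)..(2 * Real.pi),
            Real.exp ((2 * l * r) * Real.cos θ) := hIconst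
      _ ≤ Real.exp (β * l * r ^ 2) * (2 * Real.pi * Real.exp ((2 * l * r) ^ 2 / 4)) :=
          mul_le_mul_of_nonneg_left hI0 (Real.exp_pos _).le
      _ = 2 * Real.pi * Real.exp (((l:ℝ) ^ 2 + β * l) * r ^ 2) := by
          rw [mul_left_comm, ← Real.exp_add]
          congr 1
          ring
  have hfinal : ((l:ℝ) ^ 2 + β * l) / (p:ℝ) ^ (2 * σ) = ((l:ℝ) ^ 2 + β * l) * r ^ 2 := by
    rw [hrP2, div_eq_mul_inv]
  rw [hfinal]
  calc (1 / (2 * Real.pi)) * ∫ θ in (0:ℝ)..(2 * Real.pi),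
      ((p:ℝ) ^ (2 * σ) / ((p:ℝ) ^ (2 * σ) + 1 - 2 * (p:ℝ) ^ σ * Real.cos θ)) ^ l
      ≤ (1 / (2 * Real.pi)) * (2 * Real.pi * Real.exp (((l:ℝ) ^ 2 + β * l) * r ^ 2)) := by
        apply mul_le_mul_of_nonneg_left hchain (by positivity)
    _ = Real.exp (((l:ℝ) ^ 2 + β * l) * r ^ 2) := by
        field_simp
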